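/- Let ≿_n be a sequence of reflexive transitive relations on a metric space X whose graphs converge in the Hausdorff metric to the graph of a relation ≿, and let D_n ⊆ K_n be sets on which ≿_n is complete, with D_n → D in the Hausdorff metric on compact sets. Then ≿ is complete on D (i.e., D is a ≿-domain). -/

import Mathlib

open Filter
open scoped ENNReal

private lemma aux_mem_limit {X : Type*} [MetricSpace X] (S : ℕ → Set (X × X)) (T : Set (X × X))
    (hT : IsClosed T)
    (hconv : Tendsto (fun n => EMetric.hausdorffEdist (S n) T) atTop (nhds (0 : ℝ≥0∞)))
    (p : ℕ → X × X) (q : X × X) (hp : Tendsto p atTop (nhds q))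
    (hfreq : ∃ᶠ n in atTop, p n ∈ S n) : q ∈ T := by
  rw [← hT.closure_eq, EMetric.mem_closure_iff_infEdist_zero]
  by_contra h
  set ε := EMetric.infEdist q T with hε
  have hpos : 0 < ε := pos_iff_ne_zero.mpr h
  have hhalf : (0 : ℝ≥0∞) < ε / 2 := ENNReal.half_pos hpos.ne'
  have h1 : ∀ᶠ n in atTop, edist (p n) q < ε / 2 :=
    eventually_atTop.mpr (EMetric.tendsto_atTop.mp hp (ε / 2) hhalf)
  have h2 : ∀ᶠ n in atTop, EMetric.hausdorffEdist (S n) T < ε / 2 :=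
    hconv.eventually_lt_const hhalf
  obtain ⟨n, hn1, hn2, hn3⟩ := (hfreq.and_eventually (h1.and h2)).exists
  have key : ε ≤ EMetric.infEdist q (S n) + EMetric.hausdorffEdist (S n) T :=
    EMetric.infEdist_le_infEdist_add_hausdorffEdist
  have key2 : ε ≤ edist q (p n) + EMetric.hausdorffEdist (S n) T :=
    key.trans (add_le_add_left (EMetric.infEdist_le_edist_of_mem hn1) _)
  rw [edist_comm] at hn2
  have : ε < ε / 2 + ε / 2 := lt_of_le_of_lt key2 (ENNReal.add_lt_add hn2 hn3)
  rw [ENNReal.add_halves] at this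
  exact lt_irrefl _ this

/-- If the closed graphs of reflexive transitive relations ≿ₙ converge in
the Hausdorff distance to the closed graph of ≿, and ≿ₙ is complete on Dₙ with
nonempty compact Dₙ → D in the Hausdorff metric, then ≿ is complete on D. -/
theorem stmt_18 {X : Type*} [MetricSpace X]
    (Rn : ℕ → X → X → Prop) (R : X → X → Prop)
    (hrefln : ∀ n, Reflexive (Rn n)) (htransn : ∀ n, Transitive (Rn n))
    (hclosedn : ∀ n, IsClosed {p : X × X | Rn n p.1 p.2})
    (hclosed : IsClosed {p : X × X | R p.1 p.2})
    (hRconv : Tendsto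
      (fun n => EMetric.hausdorffEdist {p : X × X | Rn n p.1 p.2} {p : X × X | R p.1 p.2})
      atTop (nhds (0 : ℝ≥0∞)))
    (K D : ℕ → Set X) (Dl : Set X)
    (hD : ∀ n, D n ⊆ K n ∧ (D n).Nonempty ∧ IsCompact (D n))
    (hDl : Dl.Nonempty) (hDlc : IsCompact Dl)
    (hDconv : Tendsto (fun n => Metric.hausdorffDist (D n) Dl) atTop (nhds 0))
    (hcomp : ∀ n, ∀ x ∈ D n, ∀ y ∈ D n, Rn n x y ∨ Rn n y x) :
    ∀ x ∈ Dl, ∀ y ∈ Dl, R x y ∨ R y x := by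
  intro x hx y hy
  have hne : ∀ n, (D n).Nonempty := fun n => (hD n).2.1
  have hcpt : ∀ n, IsCompact (D n) := fun n => (hD n).2.2
  have hfin : ∀ n, EMetric.hausdorffEdist Dl (D n) ≠ ⊤ := fun n =>
    Metric.hausdorffEdist_ne_top_of_nonempty_of_bounded hDl (hne n)
      hDlc.isBounded (hcpt n).isBounded
  choose xn hxn hxd using fun n => (hcpt n).exists_infDist_eq_dist (hne n) x
  choose yn hyn hyd using fun n => (hcpt n).exists_infDist_eq_dist (hne n) y
  have hbound : ∀ (z : X), z ∈ Dl → ∀ n, Metric.infDist z (D n) ≤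
      Metric.hausdorffDist (D n) Dl := by
    intro z hz n
    rw [Metric.hausdorffDist_comm]
    exact Metric.infDist_le_hausdorffDist_of_mem hz (hfin n)
  have hxt : Tendsto (fun n => dist x (xn n)) atTop (nhds 0) := by
    refine squeeze_zero (fun n => dist_nonneg) (fun n => ?_) hDconv
    rw [← hxd n]; exact hbound x hx n
  have hyt : Tendsto (fun n => dist y (yn n)) atTop (nhds 0) := by
    refine squeeze_zero (fun n => dist_nonneg) (fun n => ?_) hDconv
    rw [← hyd n]; exact hbound y hy n
  have hxlim : Tendsto xn atTop (nhds x) := by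
    refine tendsto_iff_dist_tendsto_zero.mpr ?_
    simpa [dist_comm] using hxt
  have hylim : Tendsto yn atTop (nhds y) := by
    refine tendsto_iff_dist_tendsto_zero.mpr ?_
    simpa [dist_comm] using hyt
  have hfr : (∃ᶠ n in atTop, Rn n (xn n) (yn n)) ∨ ∃ᶠ n in atTop, Rn n (yn n) (xn n) :=
    frequently_or_distrib.mp
      (Filter.Frequently.of_forall fun n => hcomp n (xn n) (hxn n) (yn n) (hyn n))
  rcases hfr with hfr | hfr
  · left
    exact aux_mem_limit (fun n => {p : X × X | Rn n p.1 p.2}) {p : X × X | R p.1 p.2}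
      hclosed hRconv (fun n => (xn n, yn n)) (x, y) (hxlim.prodMk_nhds hylim) hfr
  · right
    exact aux_mem_limit (fun n => {p : X × X | Rn n p.1 p.2}) {p : X × X | R p.1 p.2}
      hclosed hRconv (fun n => (yn n, xn n)) (y, x) (hylim.prodMk_nhds hxlim) hfr
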